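/- Let H be a transcendental semigroup having no oscillatory wandering domain, i.e. no connected component of F(H) is contained in BU(H). Then BU(H) ⊆ J(H). -/

import Mathlib

open Filter Topology Bornology Set

noncomputable section

/-- An entire function: holomorphic on all of ℂ. A transcendental entire function
is entire and not a polynomial. -/
def TranscendentalEntire (f : ℂ → ℂ) : Prop :=
  Differentiable ℂ f ∧ ¬ ∃ p : Polynomial ℂ, ∀ z, f z = p.eval z

/-- The escaping set of a single entire function. -/
def escapingSet (f : ℂ → ℂ) : Set ℂ :=
  {z | Tendsto (fun n => ‖f^[n] z‖) atTop atTop}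

/-- The filled Julia set of a single entire function. -/
def filledJuliaSet (f : ℂ → ℂ) : Set ℂ :=
  {z | IsBounded (Set.range fun n => f^[n] z)}

/-- The bungee set of a single entire function. -/
def bungeeSet (f : ℂ → ℂ) : Set ℂ := (escapingSet f ∪ filledJuliaSet f)ᶜ

/-- A transcendental semigroup: a nonempty set of transcendental entire functions
closed under composition. -/
def TranscendentalSemigroup (H : Set (ℂ → ℂ)) : Prop :=
  H.Nonempty ∧ (∀ h ∈ H, TranscendentalEntire h) ∧ ∀ g ∈ H, ∀ h ∈ H, g ∘ h ∈ H

/-- The filled Julia set of a semigroup. -/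
def sgFilledJuliaSet (H : Set (ℂ → ℂ)) : Set ℂ :=
  {z | IsBounded ((fun h => h z) '' H)}

/-- The escaping set of a semigroup. -/
def sgEscapingSet (H : Set (ℂ → ℂ)) : Set ℂ :=
  {z | ∀ R > 0, {h ∈ H | ‖h z‖ ≤ R}.Finite}

/-- The bungee set of a semigroup. -/
def sgBungeeSet (H : Set (ℂ → ℂ)) : Set ℂ := (sgEscapingSet H ∪ sgFilledJuliaSet H)ᶜ

/-- A sequence of functions diverges to ∞ locally uniformly on `U`. -/
def DivergesLocUnifOn (s : ℕ → ℂ → ℂ) (U : Set ℂ) : Prop :=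
  ∀ C ⊆ U, IsCompact C → ∀ M > 0, ∀ᶠ k in atTop, ∀ w ∈ C, M < ‖s k w‖

/-- The Fatou set of a semigroup: points with an open neighborhood on which every
sequence from `H` has a subsequence converging locally uniformly or diverging to ∞
locally uniformly. -/
def sgFatouSet (H : Set (ℂ → ℂ)) : Set ℂ :=
  {z | ∃ U : Set ℂ, IsOpen U ∧ z ∈ U ∧
    ∀ s : ℕ → ℂ → ℂ, (∀ n, s n ∈ H) →
      ∃ φ : ℕ → ℕ, StrictMono φ ∧
        ((∃ g : ℂ → ℂ, TendstoLocallyUniformlyOn (fun k => s (φ k)) g atTop U) ∨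
          DivergesLocUnifOn (fun k => s (φ k)) U)}

/-- The Julia set of a semigroup. -/
def sgJuliaSet (H : Set (ℂ → ℂ)) : Set ℂ := (sgFatouSet H)ᶜ

/-- The semigroup of (positive) iterates of a single function. -/
def iterateSemigroup (f : ℂ → ℂ) : Set (ℂ → ℂ) := {g | ∃ n ≥ 1, g = f^[n]}

/-- The Fatou set of a single function. -/
def fatouSet (f : ℂ → ℂ) : Set ℂ := sgFatouSet (iterateSemigroup f)

/-- The Julia set of a single function. -/
def juliaSet (f : ℂ → ℂ) : Set ℂ := (fatouSet f)ᶜ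

/-- An abelian semigroup of functions. -/
def AbelianSG (H : Set (ℂ → ℂ)) : Prop := ∀ g ∈ H, ∀ h ∈ H, g ∘ h = h ∘ g

/-- `a` is a finite asymptotic value of `f`. -/
def AsymptoticValue (f : ℂ → ℂ) (a : ℂ) : Prop :=
  ∃ γ : ℝ → ℂ, Continuous γ ∧ Tendsto (fun t => ‖γ t‖) atTop atTop ∧
    Tendsto (fun t => f (γ t)) atTop (nhds a)


/-- The normality property of a Fatou neighborhood. -/
def FatouProp (H : Set (ℂ → ℂ)) (U : Set ℂ) : Prop :=
  ∀ s : ℕ → ℂ → ℂ, (∀ n, s n ∈ H) →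
    ∃ φ : ℕ → ℕ, StrictMono φ ∧
      ((∃ g : ℂ → ℂ, TendstoLocallyUniformlyOn (fun k => s (φ k)) g atTop U) ∨
        DivergesLocUnifOn (fun k => s (φ k)) U)

lemma mem_sgFatouSet_iff {H : Set (ℂ → ℂ)} {z : ℂ} :
    z ∈ sgFatouSet H ↔ ∃ U : Set ℂ, IsOpen U ∧ z ∈ U ∧ FatouProp H U := Iff.rfl

lemma key_K {H : Set (ℂ → ℂ)} {U : Set ℂ} (hU : FatouProp H U) {z w : ℂ}
    (hz : z ∈ U) (hw : w ∈ U) (hzK : z ∈ sgFilledJuliaSet H) :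
    w ∈ sgFilledJuliaSet H := by
  by_contra hwK
  simp only [sgFilledJuliaSet, Set.mem_setOf_eq] at hwK hzK ⊢
  have hsel : ∀ n : ℕ, ∃ h, h ∈ H ∧ (n : ℝ) < ‖h w‖ := by
    intro n
    by_contra hcon
    push_neg at hcon
    exact hwK (isBounded_iff_forall_norm_le.mpr ⟨n, by
      rintro x ⟨h, hh, rfl⟩
      simpa using hcon h hh⟩)
  choose s hsH hsB using hsel
  obtain ⟨φ, hφ, hcase⟩ := hU s hsH
  rcases hcase with ⟨g, hg⟩ | hdiv
  · have hptw : Tendsto (fun k => s (φ k) w) atTop (nhds (g w)) := hg.tendsto_at hw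
    have h2 : Tendsto (fun k => ‖s (φ k) w‖) atTop atTop := by
      apply tendsto_atTop_mono (f := fun k : ℕ => (k : ℝ))
      · intro k
        have := (hsB (φ k)).le
        have hk : (k : ℝ) ≤ (φ k : ℝ) := by exact_mod_cast hφ.id_le k
        exact hk.trans this
      · exact tendsto_natCast_atTop_atTop
    exact not_tendsto_atTop_of_tendsto_nhds hptw.norm h2
  · obtain ⟨C, hC⟩ := isBounded_iff_forall_norm_le.mp hzK
    obtain ⟨k, hk⟩ := (hdiv {z} (Set.singleton_subset_iff.mpr hz) isCompact_singleton
      (max C 0 + 1) (by positivity)).exists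
    have h1 : max C 0 + 1 < ‖s (φ k) z‖ := hk z rfl
    have h2 : ‖s (φ k) z‖ ≤ C := hC _ ⟨s (φ k), hsH (φ k), rfl⟩
    linarith [le_max_left C 0]

lemma key_I {H : Set (ℂ → ℂ)} {U : Set ℂ} (hU : FatouProp H U) {z w : ℂ}
    (hz : z ∈ U) (hw : w ∈ U) (hzI : z ∉ sgEscapingSet H) :
    w ∉ sgEscapingSet H := by
  have hzI' : ∃ R > 0, ¬ {h ∈ H | ‖h z‖ ≤ R}.Finite := by
    by_contra hcon
    push_neg at hcon
    exact hzI fun R hR => hcon R hR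
  obtain ⟨R, hR, hinf'⟩ := hzI'
  have hinf : {h ∈ H | ‖h z‖ ≤ R}.Infinite := hinf'
  let e := Set.Infinite.natEmbedding _ hinf
  set s : ℕ → ℂ → ℂ := fun n => (e n : ℂ → ℂ) with hs
  have hsH : ∀ n, s n ∈ H := fun n => (e n).2.1
  have hsR : ∀ n, ‖s n z‖ ≤ R := fun n => (e n).2.2
  have hsinj : Function.Injective s := fun a b hab => e.injective (Subtype.coe_injective hab)
  obtain ⟨φ, hφ, hcase⟩ := hU s hsH
  rcases hcase with ⟨g, hg⟩ | hdiv
  · intro hwI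
    have hptw : Tendsto (fun k => s (φ k) w) atTop (nhds (g w)) := hg.tendsto_at hw
    have hev : ∀ᶠ k in atTop, ‖s (φ k) w‖ < ‖g w‖ + 1 :=
      hptw.norm.eventually_lt_const (by linarith)
    obtain ⟨N, hN⟩ := hev.exists_forall_of_atTop
    have hfin : {h ∈ H | ‖h w‖ ≤ ‖g w‖ + 1}.Finite :=
      hwI (‖g w‖ + 1) (by positivity)
    refine hfin.not_infinite (Set.infinite_of_injective_forall_mem
      (f := fun k : ℕ => s (φ (N + k))) ?_ ?_)
    · intro a b hab
      have := hsinj hab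
      have := hφ.injective this
      omega
    · intro k
      refine ⟨hsH _, ?_⟩
      have := hN (N + k) (by omega)
      exact this.le
  · obtain ⟨k, hk⟩ := (hdiv {z} (Set.singleton_subset_iff.mpr hz) isCompact_singleton
      R hR).exists
    exact absurd (hsR (φ k)) (not_le.mpr (hk z rfl))

/-- a transcendental semigroup with no oscillatory wandering domain
satisfies BU(H) ⊆ J(H). -/
theorem stmt_13 (H : Set (ℂ → ℂ)) (hH : TranscendentalSemigroup H)
    (hosc : ∀ z ∈ sgFatouSet H, ¬ connectedComponentIn (sgFatouSet H) z ⊆ sgBungeeSet H) :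
    sgBungeeSet H ⊆ sgJuliaSet H := by
  intro z hzBU
  by_contra hzJ
  have hzF : z ∈ sgFatouSet H := by
    simpa [sgJuliaSet] using hzJ
  refine hosc z hzF ?_
  -- choose Fatou neighborhoods
  have hch : ∀ z' : ℂ, ∃ U : Set ℂ,
      z' ∈ sgFatouSet H → IsOpen U ∧ z' ∈ U ∧ FatouProp H U := by
    intro z'
    by_cases h : z' ∈ sgFatouSet H
    · obtain ⟨U, hU⟩ := mem_sgFatouSet_iff.mp h
      exact ⟨U, fun _ => hU⟩
    · exact ⟨∅, fun h' => absurd h' h⟩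
  choose U hU using hch
  have hUF : ∀ z', ∀ hz' : z' ∈ sgFatouSet H, U z' ⊆ sgFatouSet H := by
    intro z' hz' w hw
    exact mem_sgFatouSet_iff.mpr ⟨U z', (hU z' hz').1, hw, (hU z' hz').2.2⟩
  -- each Fatou neighborhood is entirely in BU or entirely out of BU
  have hKiff : ∀ z', ∀ hz' : z' ∈ sgFatouSet H, ∀ w ∈ U z',
      (w ∈ sgFilledJuliaSet H ↔ z' ∈ sgFilledJuliaSet H) := by
    intro z' hz' w hw
    exact ⟨fun h => key_K (hU z' hz').2.2 hw (hU z' hz').2.1 h,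
      fun h => key_K (hU z' hz').2.2 (hU z' hz').2.1 hw h⟩
  have hIiff : ∀ z', ∀ hz' : z' ∈ sgFatouSet H, ∀ w ∈ U z',
      (w ∉ sgEscapingSet H ↔ z' ∉ sgEscapingSet H) := by
    intro z' hz' w hw
    exact ⟨fun h => key_I (hU z' hz').2.2 hw (hU z' hz').2.1 h,
      fun h => key_I (hU z' hz').2.2 (hU z' hz').2.1 hw h⟩
  have hBUiff : ∀ z', ∀ hz' : z' ∈ sgFatouSet H, ∀ w ∈ U z',
      (w ∈ sgBungeeSet H ↔ z' ∈ sgBungeeSet H) := by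
    intro z' hz' w hw
    simp only [sgBungeeSet, Set.mem_compl_iff, Set.mem_union, not_or]
    constructor
    · rintro ⟨h1, h2⟩
      exact ⟨(hIiff z' hz' w hw).mp h1, fun hc => h2 ((hKiff z' hz' w hw).mpr hc)⟩
    · rintro ⟨h1, h2⟩
      exact ⟨(hIiff z' hz' w hw).mpr h1, fun hc => h2 ((hKiff z' hz' w hw).mp hc)⟩
  classical
  set A : Set ℂ := ⋃ (z' : ℂ) (_ : z' ∈ sgFatouSet H ∧ z' ∈ sgBungeeSet H), U z' with hA
  set B : Set ℂ := ⋃ (z' : ℂ) (_ : z' ∈ sgFatouSet H ∧ z' ∉ sgBungeeSet H), U z' with hB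
  have hAopen : IsOpen A := isOpen_biUnion fun z' hz' => (hU z' hz'.1).1
  have hBopen : IsOpen B := isOpen_biUnion fun z' hz' => (hU z' hz'.1).1
  have hABU : A ⊆ sgBungeeSet H := by
    intro w hw
    obtain ⟨z', hz', hwU⟩ := Set.mem_iUnion₂.mp hw
    exact (hBUiff z' hz'.1 w hwU).mpr hz'.2
  have hBBU : B ⊆ (sgBungeeSet H)ᶜ := by
    intro w hw
    obtain ⟨z', hz', hwU⟩ := Set.mem_iUnion₂.mp hw
    exact fun hc => hz'.2 ((hBUiff z' hz'.1 w hwU).mp hc)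
  have hdisj : Disjoint A B := Set.disjoint_left.mpr fun w hwA hwB => hBBU hwB (hABU hwA)
  have hsub : connectedComponentIn (sgFatouSet H) z ⊆ A ∪ B := by
    intro w hw
    have hwF : w ∈ sgFatouSet H := connectedComponentIn_subset _ _ hw
    by_cases hwBU : w ∈ sgBungeeSet H
    · exact Or.inl (Set.mem_iUnion₂.mpr ⟨w, ⟨hwF, hwBU⟩, (hU w hwF).2.1⟩)
    · exact Or.inr (Set.mem_iUnion₂.mpr ⟨w, ⟨hwF, hwBU⟩, (hU w hwF).2.1⟩)
  have hzA : z ∈ A := Set.mem_iUnion₂.mpr ⟨z, ⟨hzF, hzBU⟩, (hU z hzF).2.1⟩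
  have hzC : z ∈ connectedComponentIn (sgFatouSet H) z := mem_connectedComponentIn hzF
  have hpre : IsPreconnected (connectedComponentIn (sgFatouSet H) z) :=
    (isConnected_connectedComponentIn_iff.mpr hzF).isPreconnected
  have hfinal : connectedComponentIn (sgFatouSet H) z ⊆ A :=
    hpre.subset_left_of_subset_union hAopen hBopen hdisj hsub ⟨z, hzC, hzA⟩
  exact fun w hw => hABU (hfinal hw)
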